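/- Let X be a quasi κ-metrizable topological space and Y a dense subspace of X. Then Y is quasi κ-metrizable: if ρ is a quasi κ-metric on X, then d(y, cl_Y U) := ρ(y, cl_X U), for U open in Y, defines a quasi κ-metric on Y. -/

import Mathlib

/-- A set is regularly closed if it equals the closure of its interior. -/
def RegClosed {X : Type*} [TopologicalSpace X] (C : Set X) : Prop :=
  C = closure (interior C)

/-- A set is regularly open if it equals the interior of its closure. -/
def RegOpen {X : Type*} [TopologicalSpace X] (U : Set X) : Prop :=
  U = interior (closure U)

/-- A quasi κ-metric on `X`: a nonnegative function of a point and a regularly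
closed set satisfying axioms K1*, K2, K3 and K4. -/
structure IsQuasiKappaMetric {X : Type*} [TopologicalSpace X] (ρ : X → Set X → ℝ) : Prop where
  nonneg : ∀ x C, RegClosed C → 0 ≤ ρ x C
  k1star : ∀ C : Set X, RegClosed C → ∃ V : Set X, IsOpen V ∧ V ⊆ Cᶜ ∧
    Cᶜ ⊆ closure V ∧ ∀ x, 0 < ρ x C ↔ x ∈ V
  k2 : ∀ x (C C' : Set X), RegClosed C → RegClosed C' → C ⊆ C' → ρ x C' ≤ ρ x C
  k3 : ∀ C : Set X, RegClosed C → Continuous (fun x => ρ x C)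
  k4 : ∀ S : Set (Set X), S.Nonempty → (∀ C ∈ S, RegClosed C) → IsChain (· ⊆ ·) S →
    ∀ x, ρ x (closure (⋃₀ S)) = sInf {r : ℝ | ∃ C ∈ S, r = ρ x C}

section Aux

variable {X : Type*} [TopologicalSpace X]

lemma regClosed_closure_of_isOpen {U : Set X} (hU : IsOpen U) : RegClosed (closure U) := by
  refine subset_antisymm ?_ ?_
  · exact closure_mono (interior_maximal subset_closure hU)
  · simpa using closure_mono (interior_subset (s := closure U))

/-- Closure (in `X`) of the image of an open subset of a dense subspace equals the
closure of an open set of `X`, hence is regularly closed. -/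
lemma closure_image_regClosed {Y : Set X} (hY : Dense Y) {U : Set Y} (hU : IsOpen U) :
    RegClosed (closure ((Subtype.val : Y → X) '' U)) := by
  obtain ⟨V, hV, rfl⟩ := isOpen_induced_iff.mp hU
  have himg : (Subtype.val : Y → X) '' ((Subtype.val : Y → X) ⁻¹' V) = Y ∩ V :=
    Subtype.image_preimage_coe Y V
  have hcl : closure (Y ∩ V) = closure V := by
    refine subset_antisymm (closure_mono Set.inter_subset_right) ?_
    have h1 : V ⊆ closure (V ∩ Y) := hY.open_subset_closure_inter hV
    have := closure_mono h1
    rw [closure_closure] at this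
    simpa [Set.inter_comm] using this
  rw [himg, hcl]
  exact regClosed_closure_of_isOpen hV

lemma regClosed_interior_open {C : Set X} : IsOpen (interior C) := isOpen_interior

end Aux

theorem stmt6 {X : Type*} [TopologicalSpace X] (Y : Set X) (hY : Dense Y)
    (ρ : X → Set X → ℝ) (hρ : IsQuasiKappaMetric ρ)
    (d : Y → Set Y → ℝ)
    (hd : ∀ (y : Y) (U : Set Y), IsOpen U →
      d y (closure U) = ρ (y : X) (closure ((Subtype.val : Y → X) '' U))) :
    IsQuasiKappaMetric d := by
  classical
  set v : Y → X := (Subtype.val : Y → X) with hv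
  -- the companion regularly closed set in X
  set F : Set Y → Set X := fun C => closure (v '' interior C) with hF
  have hFreg : ∀ C : Set Y, RegClosed (F C) := fun C =>
    closure_image_regClosed hY isOpen_interior
  have hdF : ∀ (y : Y) (C : Set Y), RegClosed C → d y C = ρ (y : X) (F C) := by
    intro y C hC
    have := hd y (interior C) isOpen_interior
    rw [← hC] at this
    exact this
  have hmemF : ∀ (C : Set Y) (_ : RegClosed C) (y : Y), y ∈ C ↔ (y : X) ∈ F C := by
    intro C hC y
    conv_lhs => rw [hC]
    exact closure_subtype
  have hFmono : ∀ C C' : Set Y, C ⊆ C' → F C ⊆ F C' := by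
    intro C C' h
    exact closure_mono (Set.image_mono (interior_mono h))
  constructor
  · intro y C hC
    rw [hdF y C hC]
    exact hρ.nonneg _ _ (hFreg C)
  · -- K1*
    intro C hC
    obtain ⟨V, hVopen, hVsub, hVdense, hVpos⟩ := hρ.k1star (F C) (hFreg C)
    refine ⟨v ⁻¹' V, hVopen.preimage continuous_subtype_val, ?_, ?_, ?_⟩
    · intro y hy
      simp only [Set.mem_compl_iff]
      intro hyC
      exact hVsub hy ((hmemF C hC y).mp hyC)
    · intro y hy
      have hyD : (y : X) ∈ (F C)ᶜ := fun h => hy ((hmemF C hC y).mpr h)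
      have hyV : (y : X) ∈ closure V := hVdense hyD
      -- y ∈ closure_Y (v ⁻¹' V)
      rw [closure_subtype]
      have himg : v '' (v ⁻¹' V) = Y ∩ V := Subtype.image_preimage_coe Y V
      have hcl : closure V ⊆ closure (Y ∩ V) := by
        have h1 : V ⊆ closure (V ∩ Y) := hY.open_subset_closure_inter hVopen
        have := closure_mono h1
        rw [closure_closure] at this
        simpa [Set.inter_comm] using this
      rw [himg]
      exact hcl hyV
    · intro y
      rw [hdF y C hC]
      exact hVpos (y : X)
  · -- K2
    intro y C C' hC hC' hsub
    rw [hdF y C hC, hdF y C' hC']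
    exact hρ.k2 _ _ _ (hFreg C) (hFreg C') (hFmono C C' hsub)
  · -- K3
    intro C hC
    have : (fun y : Y => d y C) = (fun x => ρ x (F C)) ∘ v := by
      funext y; exact hdF y C hC
    rw [this]
    exact (hρ.k3 (F C) (hFreg C)).comp continuous_subtype_val
  · -- K4
    intro S hS hSreg hSchain y
    -- the open set whose closure is closure (⋃₀ S)
    set U : Set Y := ⋃₀ (interior '' S) with hU
    have hUopen : IsOpen U := by
      apply isOpen_sUnion
      rintro t ⟨C, _, rfl⟩
      exact isOpen_interior
    have hclU : closure U = closure (⋃₀ S) := by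
      refine subset_antisymm (closure_mono ?_) ?_
      · rintro x ⟨t, ⟨C, hCS, rfl⟩, hx⟩
        exact ⟨C, hCS, interior_subset hx⟩
      · refine closure_minimal ?_ isClosed_closure
        rintro x ⟨C, hCS, hxC⟩
        have : x ∈ closure (interior C) := (hSreg C hCS) ▸ hxC
        refine closure_mono ?_ this
        exact Set.subset_sUnion_of_mem ⟨C, hCS, rfl⟩
    -- apply k4 in X to T = F '' S
    set T : Set (Set X) := F '' S with hT
    have hTne : T.Nonempty := hS.image F
    have hTreg : ∀ D ∈ T, RegClosed D := by
      rintro D ⟨C, _, rfl⟩; exact hFreg C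
    have hTchain : IsChain (· ⊆ ·) T := by
      rintro D ⟨C, hCS, rfl⟩ D' ⟨C', hC'S, rfl⟩ hne
      rcases hSchain.total hCS hC'S with h | h
      · exact Or.inl (hFmono _ _ h)
      · exact Or.inr (hFmono _ _ h)
    have hk4 := hρ.k4 T hTne hTreg hTchain (y : X)
    -- closure (v '' U) = closure (⋃₀ T)
    have himgU : v '' U = ⋃ C ∈ S, v '' interior C := by
      rw [hU]
      ext x
      simp only [Set.mem_image, Set.mem_sUnion, Set.mem_iUnion]
      constructor
      · rintro ⟨z, ⟨t, ⟨C, hCS, rfl⟩, hz⟩, rfl⟩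
        exact ⟨C, hCS, z, hz, rfl⟩
      · rintro ⟨C, hCS, z, hz, rfl⟩
        exact ⟨z, ⟨interior C, ⟨C, hCS, rfl⟩, hz⟩, rfl⟩
    have hsT : ⋃₀ T = ⋃ C ∈ S, closure (v '' interior C) := by
      rw [hT, Set.sUnion_image]
    have hclEq : closure (v '' U) = closure (⋃₀ T) := by
      rw [himgU, hsT]
      refine subset_antisymm (closure_mono ?_) ?_
      · exact Set.iUnion₂_mono fun C _ => subset_closure
      · have : (⋃ C ∈ S, closure (v '' interior C)) ⊆
            closure (⋃ C ∈ S, v '' interior C) := by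
          refine Set.iUnion₂_subset fun C hCS => closure_mono ?_
          exact Set.subset_iUnion₂ (s := fun C _ => v '' interior C) C hCS
        have h2 := closure_mono this
        rwa [closure_closure] at h2
    have hdleft : d y (closure (⋃₀ S)) = ρ (y : X) (closure (⋃₀ T)) := by
      rw [← hclU, hd y U hUopen, hclEq]
    rw [hdleft, hk4]
    congr 1
    ext r
    simp only [Set.mem_setOf_eq, hT]
    constructor
    · rintro ⟨D, ⟨C, hCS, rfl⟩, rfl⟩
      exact ⟨C, hCS, (hdF y C (hSreg C hCS)).symm⟩
    · rintro ⟨C, hCS, rfl⟩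
      exact ⟨F C, ⟨C, hCS, rfl⟩, hdF y C (hSreg C hCS)⟩
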